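/- If a bounded operator S on a complex Hilbert space belongs to class A (i.e. |S²| ≥ |S|²), then S is paranormal: ‖x‖·‖S²x‖ ≥ ‖Sx‖² for every x ∈ H. -/

import Mathlib

open scoped InnerProductSpace


set_option synthInstance.maxHeartbeats 1000000 in
theorem classA_paranormal (H : Type*) [NormedAddCommGroup H]
    [InnerProductSpace ℂ H] [CompleteSpace H] (S : H →L[ℂ] H)
    (hA : (star S) * S ≤ CFC.sqrt ((star (S ^ 2)) * S ^ 2)) :
    ∀ x : H, ‖x‖ * ‖(S ^ 2) x‖ ≥ ‖S x‖ ^ 2 := by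
  intro x
  set T : H →L[ℂ] H := (star (S ^ 2)) * S ^ 2 with hTdef
  have hT0 : 0 ≤ T := star_mul_self_nonneg _
  set A : H →L[ℂ] H := CFC.sqrt T with hAdef
  have hA2 : A ^ 2 = T := CFC.sq_sqrt T hT0
  -- ⟪(star S * S) x, x⟫ = ‖S x‖ ^ 2
  have hSS : RCLike.re ⟪((star S * S) : H →L[ℂ] H) x, x⟫_ℂ = ‖S x‖ ^ 2 := by
    rw [ContinuousLinearMap.star_eq_adjoint]
    have : ⟪(ContinuousLinearMap.adjoint S * S) x, x⟫_ℂ = ⟪S x, S x⟫_ℂ := by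
      rw [ContinuousLinearMap.mul_apply, ContinuousLinearMap.adjoint_inner_left]
    rw [this, inner_self_eq_norm_sq]
  -- ‖A x‖ = ‖(S ^ 2) x‖
  have hATx : ⟪T x, x⟫_ℂ = ⟪(S ^ 2) x, (S ^ 2) x⟫_ℂ := by
    rw [hTdef, ContinuousLinearMap.mul_apply, ContinuousLinearMap.star_eq_adjoint,
      ContinuousLinearMap.adjoint_inner_left]
  have hAx : ‖A x‖ ^ 2 = ‖(S ^ 2) x‖ ^ 2 := by
    have hAsa : IsSelfAdjoint A := IsSelfAdjoint.of_nonneg (CFC.sqrt_nonneg (a := T))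
    rw [ContinuousLinearMap.isSelfAdjoint_iff'] at hAsa
    have h1 : ⟪A (A x), x⟫_ℂ = ⟪A x, A x⟫_ℂ := by
      nth_rewrite 1 [← hAsa]
      exact ContinuousLinearMap.adjoint_inner_left A x (A x)
    have h2 : A (A x) = T x := by rw [← hA2]; rfl
    rw [h2, hATx] at h1
    have h3 := congrArg (fun z : ℂ => RCLike.re z) h1.symm
    simpa only [inner_self_eq_norm_sq] using h3
  have hAxeq : ‖A x‖ = ‖(S ^ 2) x‖ := by
    rw [← Real.sqrt_sq (norm_nonneg (A x)), ← Real.sqrt_sq (norm_nonneg ((S ^ 2) x)), hAx]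
  -- order gives positivity
  have hpos : (A - star S * S).IsPositive := hA
  have hle : ‖S x‖ ^ 2 ≤ RCLike.re ⟪A x, x⟫_ℂ := by
    have h := hpos.inner_nonneg_left x
    rw [ContinuousLinearMap.sub_apply, inner_sub_left] at h
    have h' : (0:ℝ) ≤ RCLike.re (⟪A x, x⟫_ℂ - ⟪(star S * S) x, x⟫_ℂ) := (Complex.le_def.mp h).1
    rw [map_sub] at h'
    rw [hSS] at h'
    linarith
  have hcs : RCLike.re ⟪A x, x⟫_ℂ ≤ ‖A x‖ * ‖x‖ := re_inner_le_norm _ _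
  rw [hAxeq] at hcs
  calc ‖S x‖ ^ 2 ≤ ‖(S ^ 2) x‖ * ‖x‖ := le_trans hle hcs
    _ = ‖x‖ * ‖(S ^ 2) x‖ := mul_comm _ _
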